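/- Let |S| = n, let k ≤ n, and let Q_0 = ∅, Q_1, …, Q_k be a greedy sequence for the total utility U of length k (part of a greedy sequence that, continued for n steps, exhausts S). Then for every subset OPT ⊆ S, U(Q_k) ≥ (k/n) · U(OPT); i.e., the greedy algorithm achieves approximation ratio k/n for TOPS. -/
import Mathlib


open Finset

/-- Utility of a single trajectory with preference function `ψ` over a set of sites `Q`:
the maximum preference score over `Q`, with value `0` on the empty set. -/
noncomputable def trajU {S : Type*} (ψ : S → ℝ) (Q : Finset S) : ℝ :=
  if h : Q.Nonempty then Q.sup' h ψ else 0

/-- Total utility: sum of the per-trajectory utilities over all trajectories. -/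
noncomputable def totalU {T S : Type*} [Fintype T] (ψ : T → S → ℝ) (Q : Finset S) : ℝ :=
  ∑ j, trajU (ψ j) Q

/-- A greedy sequence of length `k` for a set function `f` on subsets of a finite type `S`:
`Q 0 = ∅` and at each step `θ` (for `1 ≤ θ ≤ k`), `Q θ` is obtained from `Q (θ-1)` by
inserting a new element `s_θ ∈ S \ Q (θ-1)`, chosen so that no other single insertion
gives a larger value of `f`. -/
def IsGreedySeq {S : Type*} [DecidableEq S] (f : Finset S → ℝ)
    (Q : ℕ → Finset S) (k : ℕ) : Prop :=
  Q 0 = ∅ ∧ ∀ θ, 1 ≤ θ → θ ≤ k →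
    (∃ s, s ∉ Q (θ - 1) ∧ Q θ = insert s (Q (θ - 1))) ∧
    ∀ s : S, f (insert s (Q (θ - 1))) ≤ f (Q θ)

lemma trajU_empty {S : Type*} (ψ : S → ℝ) : trajU ψ (∅ : Finset S) = 0 := by
  simp [trajU]

lemma trajU_nonneg {S : Type*} (ψ : S → ℝ) (hψ : ∀ s, 0 ≤ ψ s) (Q : Finset S) :
    0 ≤ trajU ψ Q := by
  unfold trajU
  split
  · next h => obtain ⟨x, hx⟩ := h; exact le_trans (hψ x) (Finset.le_sup' ψ hx)
  · exact le_refl 0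

lemma trajU_insert {S : Type*} [DecidableEq S] (ψ : S → ℝ) (hψ : ∀ s, 0 ≤ ψ s)
    (s : S) (A : Finset S) :
    trajU ψ (insert s A) = max (ψ s) (trajU ψ A) := by
  by_cases h : A.Nonempty
  · rw [trajU, trajU, dif_pos h, dif_pos (Finset.insert_nonempty s A), Finset.sup'_insert]
  · rw [Finset.not_nonempty_iff_eq_empty] at h
    subst h
    simp [trajU, max_eq_left (hψ s)]

lemma trajU_mono {S : Type*} (ψ : S → ℝ) (hψ : ∀ s, 0 ≤ ψ s)
    {A B : Finset S} (hAB : A ⊆ B) : trajU ψ A ≤ trajU ψ B := by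
  by_cases h : A.Nonempty
  · have hB : B.Nonempty := h.mono hAB
    rw [trajU, trajU, dif_pos h, dif_pos hB]
    exact Finset.sup'_le h ψ fun a ha => Finset.le_sup' ψ (hAB ha)
  · rw [Finset.not_nonempty_iff_eq_empty] at h
    subst h
    rw [trajU_empty]
    exact trajU_nonneg ψ hψ B

lemma trajU_submod {S : Type*} [DecidableEq S] (ψ : S → ℝ) (hψ : ∀ s, 0 ≤ ψ s)
    {A B : Finset S} (hAB : A ⊆ B) (s : S) :
    trajU ψ (insert s B) - trajU ψ B ≤ trajU ψ (insert s A) - trajU ψ A := by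
  rw [trajU_insert ψ hψ s A, trajU_insert ψ hψ s B]
  have hab : trajU ψ A ≤ trajU ψ B := trajU_mono ψ hψ hAB
  rcases le_total (ψ s) (trajU ψ B) with h | h
  · rw [max_eq_right h]
    have := le_max_right (ψ s) (trajU ψ A)
    linarith
  · rw [max_eq_left h, max_eq_left (le_trans hab h)]
    linarith

lemma totalU_empty {T S : Type*} [Fintype T] (ψ : T → S → ℝ) :
    totalU ψ (∅ : Finset S) = 0 := by
  simp [totalU, trajU_empty]

lemma totalU_mono {T S : Type*} [Fintype T] (ψ : T → S → ℝ)
    (hψ : ∀ j s, 0 ≤ ψ j s) {A B : Finset S} (hAB : A ⊆ B) :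
    totalU ψ A ≤ totalU ψ B :=
  Finset.sum_le_sum fun j _ => trajU_mono (ψ j) (hψ j) hAB

lemma totalU_submod {T S : Type*} [Fintype T] [DecidableEq S] (ψ : T → S → ℝ)
    (hψ : ∀ j s, 0 ≤ ψ j s) {A B : Finset S} (hAB : A ⊆ B) (s : S) :
    totalU ψ (insert s B) - totalU ψ B ≤ totalU ψ (insert s A) - totalU ψ A := by
  rw [totalU, totalU, totalU, totalU, ← Finset.sum_sub_distrib, ← Finset.sum_sub_distrib]
  exact Finset.sum_le_sum fun j _ => trajU_submod (ψ j) (hψ j) hAB s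

/-- the greedy algorithm achieves approximation ratio `k/n` for TOPS: if `Q`
is a greedy sequence for the total utility `U` that, continued for `n = |S|` steps,
exhausts `S`, then for every `OPT ⊆ S`, `U(Q_k) ≥ (k/n)·U(OPT)`. -/
theorem greedy_kn_approx {T S : Type*} [Fintype T] [Fintype S] [DecidableEq S]
    (ψ : T → S → ℝ) (hψ : ∀ j s, 0 ≤ ψ j s ∧ ψ j s ≤ 1)
    (n k : ℕ) (hn : Fintype.card S = n) (hk : k ≤ n)
    (Q : ℕ → Finset S) (hgreedy : IsGreedySeq (totalU ψ) Q n)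
    (hQn : Q n = Finset.univ) :
    ∀ OPT : Finset S, ((k : ℝ) / (n : ℝ)) * totalU ψ OPT ≤ totalU ψ (Q k) := by
  intro OPT
  have hψ0 : ∀ j s, 0 ≤ ψ j s := fun j s => (hψ j s).1
  set f : Finset S → ℝ := totalU ψ with hf
  obtain ⟨hQ0, hstep0⟩ := hgreedy
  have hstep : ∀ θ : ℕ, θ + 1 ≤ n →
      (∃ s, s ∉ Q θ ∧ Q (θ + 1) = insert s (Q θ)) ∧
      ∀ s : S, f (insert s (Q θ)) ≤ f (Q (θ + 1)) := by
    intro θ hθ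
    have := hstep0 (θ + 1) (by omega) hθ
    simpa using this
  set D : ℕ → ℝ := fun θ => f (Q (θ + 1)) - f (Q θ) with hD
  -- gains are nonnegative
  have hD0 : ∀ θ, θ + 1 ≤ n → 0 ≤ D θ := by
    intro θ hθ
    obtain ⟨⟨s, hs, hQs⟩, _⟩ := hstep θ hθ
    have : f (Q θ) ≤ f (Q (θ + 1)) := by
      rw [hQs]
      exact totalU_mono ψ hψ0 (Finset.subset_insert s (Q θ))
    simp only [hD]; linarith
  -- gains are nonincreasing
  have hDstep : ∀ θ, θ + 2 ≤ n → D (θ + 1) ≤ D θ := by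
    intro θ hθ
    obtain ⟨⟨s, hs, hQs⟩, _⟩ := hstep θ (by omega)
    obtain ⟨⟨s', hs', hQs'⟩, _⟩ := hstep (θ + 1) hθ
    have hsub : Q θ ⊆ Q (θ + 1) := by rw [hQs]; exact Finset.subset_insert s (Q θ)
    have h1 : f (insert s' (Q (θ + 1))) - f (Q (θ + 1)) ≤
        f (insert s' (Q θ)) - f (Q θ) := totalU_submod ψ hψ0 hsub s'
    have h2 : f (insert s' (Q θ)) ≤ f (Q (θ + 1)) := (hstep θ (by omega)).2 s'
    simp only [hD]
    rw [hQs']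
    linarith
  -- antitone on valid range
  have hDanti : ∀ i j, i ≤ j → j + 1 ≤ n → D j ≤ D i := by
    intro i j hij hj
    induction j with
    | zero =>
      have : i = 0 := Nat.le_zero.mp hij
      rw [this]
    | succ m ih =>
      rcases Nat.eq_or_lt_of_le hij with h | h
      · rw [h]
      · have : D (m + 1) ≤ D m := hDstep m (by omega)
        exact le_trans this (ih (by omega) (by omega))
  -- telescoping
  have htel : ∀ m : ℕ, f (Q m) = ∑ θ ∈ Finset.range m, D θ := by
    intro m
    rw [Finset.sum_range_sub (fun θ => f (Q θ)), hQ0]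
    simp [hf, totalU_empty]
  by_cases hn0 : n = 0
  · subst hn0
    have hk0 : k = 0 := Nat.le_zero.mp hk
    subst hk0
    rw [hQ0]
    simp only [Nat.cast_zero, zero_div, zero_mul]
    exact le_of_eq (totalU_empty ψ).symm
  have hnpos : (0 : ℝ) < n := by
    have : 0 < n := Nat.pos_of_ne_zero hn0
    exact_mod_cast this
  have hOPT : totalU ψ OPT ≤ f (Q n) := by
    rw [hf, hQn]
    exact totalU_mono ψ hψ0 (Finset.subset_univ OPT)
  have hmain : ((k : ℝ) / (n : ℝ)) * f (Q n) ≤ f (Q k) := by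
    rw [div_mul_eq_mul_div, div_le_iff₀ hnpos, htel n, htel k]
    have hsplit : ∑ θ ∈ Finset.range n, D θ
        = (∑ θ ∈ Finset.range k, D θ) + ∑ θ ∈ Finset.Ico k n, D θ := by
      simp only [Finset.range_eq_Ico]
      exact (Finset.sum_Ico_consecutive _ (Nat.zero_le k) hk).symm
    rw [hsplit]
    set A : ℝ := ∑ θ ∈ Finset.range k, D θ with hA
    rcases Nat.eq_or_lt_of_le hk with heq | hlt
    · subst heq
      rw [Finset.Ico_self, Finset.sum_empty, add_zero, mul_comm]
    · set B : ℝ := ∑ θ ∈ Finset.Ico k n, D θ with hB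
      have hBle : B ≤ ((n - k : ℕ) : ℝ) * D k := by
        have := Finset.sum_le_card_nsmul (Finset.Ico k n) D (D k)
          (fun θ hθ => by
            rw [Finset.mem_Ico] at hθ
            exact hDanti k θ hθ.1 hθ.2)
        simpa [Nat.card_Ico, nsmul_eq_mul] using this
      have hAge : ((k : ℕ) : ℝ) * D k ≤ A := by
        have := Finset.card_nsmul_le_sum (Finset.range k) D (D k)
          (fun θ hθ => by
            rw [Finset.mem_range] at hθ
            exact hDanti θ k (le_of_lt hθ) (by omega))
        simpa [Finset.card_range, nsmul_eq_mul] using this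
      have hDk0 : 0 ≤ D k := hD0 k (by omega)
      have hcast : ((n - k : ℕ) : ℝ) = (n : ℝ) - (k : ℝ) := by
        push_cast [Nat.cast_sub hk]
        ring
      have hkn : (k : ℝ) ≤ (n : ℝ) := by exact_mod_cast hk
      have hk0 : (0 : ℝ) ≤ (k : ℝ) := Nat.cast_nonneg k
      rw [hcast] at hBle
      nlinarith [mul_le_mul_of_nonneg_left hBle hk0,
        mul_le_mul_of_nonneg_left hAge (by linarith : (0:ℝ) ≤ (n:ℝ) - (k:ℝ))]
  calc ((k : ℝ) / (n : ℝ)) * totalU ψ OPT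
      ≤ ((k : ℝ) / (n : ℝ)) * f (Q n) :=
        mul_le_mul_of_nonneg_left hOPT (div_nonneg (Nat.cast_nonneg k) (Nat.cast_nonneg n))
    _ ≤ f (Q k) := hmain
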